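/- For any two injective maps π, ρ from {1,...,n} to {1,...,n} (i.e., permutations), the number of inversions K = |{(i,j) : i < j under ρ-order but reversed under π}| and the footrule F = Σᵢ |π(i) - ρ(i)| satisfy K ≤ F ≤ 2K. -/

import Mathlib

open Finset

namespace DG

variable {n : ℕ}




/-- inversion count as a double sum. -/
def invN (σ : Equiv.Perm (Fin n)) : ℕ :=
  ∑ i : Fin n, ∑ u : Fin n, if i < u ∧ σ u < σ i then 1 else 0

/-- footrule for a single permutation. -/
def Fd (σ : Equiv.Perm (Fin n)) : ℤ :=
  ∑ i : Fin n, |((σ i).val : ℤ) - (i.val : ℤ)|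

lemma Fd_nonneg (σ : Equiv.Perm (Fin n)) : 0 ≤ Fd σ :=
  Finset.sum_nonneg fun i _ => abs_nonneg _

lemma invN_cast (σ : Equiv.Perm (Fin n)) :
    (invN σ : ℤ) = ∑ i : Fin n, ∑ u : Fin n, (if i < u ∧ σ u < σ i then (1:ℤ) else 0) := by
  unfold invN
  push_cast
  rfl

-- card of {w | w < c} is c
lemma card_lt_aux (c : Fin n) :
    (∑ w : Fin n, (if w < c then (1:ℤ) else 0)) = (c.val : ℤ) := by
  have : (Finset.univ.filter fun w : Fin n => w < c) = Finset.Iio c := by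
    ext w; simp
  rw [Finset.sum_boole, this, Fin.card_Iio]

lemma upper (σ : Equiv.Perm (Fin n)) : Fd σ ≤ 2 * (invN σ : ℤ) := by
  set A : Fin n → ℤ := fun i => ∑ u : Fin n, (if i < u ∧ σ u < σ i then (1:ℤ) else 0) with hA
  set B : Fin n → ℤ := fun i => ∑ u : Fin n, (if u < i ∧ σ i < σ u then (1:ℤ) else 0) with hB
  have hAnn : ∀ i, 0 ≤ A i := fun i => Finset.sum_nonneg (by intro u _; positivity)
  have hBnn : ∀ i, 0 ≤ B i := fun i => Finset.sum_nonneg (by intro u _; positivity)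
  have key : ∀ i, ((σ i).val : ℤ) - (i.val : ℤ) = A i - B i := by
    intro i
    have h1 : ((σ i).val : ℤ) = ∑ u : Fin n, (if σ u < σ i then (1:ℤ) else 0) := by
      rw [← card_lt_aux (σ i), ← Equiv.sum_comp σ (fun w => if w < σ i then (1:ℤ) else 0)]
    have h2 : ((i).val : ℤ) = ∑ u : Fin n, (if u < i then (1:ℤ) else 0) := (card_lt_aux i).symm
    have h1' : ∑ u : Fin n, (if σ u < σ i then (1:ℤ) else 0)
        = (∑ u : Fin n, (if u < i ∧ σ u < σ i then (1:ℤ) else 0)) + A i := by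
      rw [hA, ← Finset.sum_add_distrib]
      refine Finset.sum_congr rfl fun u _ => ?_
      rcases lt_trichotomy u i with h | rfl | h
      · simp [h, not_lt.mpr h.le]
      · simp
      · simp [h, not_lt.mpr h.le]
    have h2' : ∑ u : Fin n, (if u < i then (1:ℤ) else 0)
        = (∑ u : Fin n, (if u < i ∧ σ u < σ i then (1:ℤ) else 0)) + B i := by
      rw [hB, ← Finset.sum_add_distrib]
      refine Finset.sum_congr rfl fun u _ => ?_
      rcases lt_trichotomy u i with h | rfl | h
      · have hne : σ u ≠ σ i := fun hc => h.ne (σ.injective hc)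
        rcases lt_or_gt_of_ne hne with h' | h' <;>
          simp [h, h', not_lt.mpr h'.le]
      · simp
      · simp [h, not_lt.mpr h.le]
    rw [h1, h2, h1', h2']; ring
  have habs : ∀ i : Fin n, |((σ i).val : ℤ) - (i.val : ℤ)| ≤ A i + B i := by
    intro i
    rw [key i]
    rw [abs_le]
    constructor <;> nlinarith [hAnn i, hBnn i]
  have hsum : Fd σ ≤ (∑ i, A i) + (∑ i, B i) := by
    rw [← Finset.sum_add_distrib]
    exact Finset.sum_le_sum fun i _ => habs i
  have hAsum : (∑ i, A i) = (invN σ : ℤ) := by rw [invN_cast]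
  have hBsum : (∑ i, B i) = (invN σ : ℤ) := by
    rw [invN_cast, hB]
    rw [Finset.sum_comm]
  linarith



lemma invN_cast2 (σ : Equiv.Perm (Fin n)) :
    (invN σ : ℤ) = ∑ v : Fin n, ∑ u : Fin n, (if u < v ∧ σ v < σ u then (1:ℤ) else 0) := by
  unfold invN; push_cast; rw [Finset.sum_comm]

lemma swap_invN (σ : Equiv.Perm (Fin n)) (i j : Fin n) (hij : i < j)
    (hmin : ∀ l, l < i → σ l = l) (ha : i < σ i) (hj : σ j = i) :
    (invN σ : ℤ) = (invN (σ * Equiv.swap i j) : ℤ) + 1 +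
      2 * ∑ v : Fin n, (if i < v ∧ v < j ∧ σ v < σ i then (1:ℤ) else 0) := by
  set σ' := σ * Equiv.swap i j with hσ'
  have hne : i ≠ j := hij.ne
  have h'i : σ' i = i := by simp [hσ', Equiv.Perm.mul_apply, Equiv.swap_apply_left, hj]
  have h'j : σ' j = σ i := by simp [hσ', Equiv.Perm.mul_apply, Equiv.swap_apply_right]
  have h'o : ∀ v, v ≠ i → v ≠ j → σ' v = σ v := by
    intro v h1 h2; simp [hσ', Equiv.Perm.mul_apply, Equiv.swap_apply_of_ne_of_ne h1 h2]
  have hgt : ∀ v, i < v → v ≠ j → i < σ v := by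
    intro v h1 h2
    rcases lt_trichotomy (σ v) i with h | h | h
    · exfalso
      have h3 := hmin (σ v) h
      have h4 : σ v = v := σ.injective h3
      rw [h4] at h; exact absurd h1 (not_lt.mpr h.le)
    · exact absurd (σ.injective (h.trans hj.symm)) h2
    · exact h
  have hij' : i.val < j.val := hij
  have hav : i.val < (σ i).val := ha
  set mZ : ℤ := ∑ v : Fin n, (if i < v ∧ v < j ∧ σ v < σ i then (1:ℤ) else 0) with hmZ
  set c : Equiv.Perm (Fin n) → Fin n → Fin n → ℤ :=
    fun τ u v => if u < v ∧ τ v < τ u then (1:ℤ) else 0 with hc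
  have key : ∀ v : Fin n, ((∑ u : Fin n, c σ u v) - ∑ u : Fin n, c σ' u v)
      = (if i < v ∧ v < j ∧ σ v < σ i then (1:ℤ) else 0)
        + (if v = j then (1 + mZ : ℤ) else 0) := by
    intro v
    rcases lt_trichotomy v j with hvj | hvj | hvj
    · rcases lt_trichotomy v i with hvi | hvi | hvi
      · -- v < i
        have hz : ∀ u : Fin n, c σ u v = c σ' u v := by
          intro u
          rcases lt_or_ge u v with huv | huv
          · have hu : u < i := huv.trans hvi
            have f1 : (σ u).val = u.val := by rw [hmin u hu]
            have f2 : (σ' u).val = u.val := by rw [h'o u hu.ne (hu.trans hij).ne, hmin u hu]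
            have f3 : (σ v).val = v.val := by rw [hmin v hvi]
            have f4 : (σ' v).val = v.val := by rw [h'o v hvi.ne hvj.ne, hmin v hvi]
            have huv' : u.val < v.val := huv
            simp only [hc, Fin.lt_def]
            split_ifs <;> omega
          · have huv' : v.val ≤ u.val := huv
            simp only [hc, Fin.lt_def]
            split_ifs <;> omega
        rw [Finset.sum_congr rfl (fun u _ => hz u), sub_self,
          if_neg (fun h : i < v ∧ _ => absurd (h.1.trans hvi) (lt_irrefl i)),
          if_neg hvj.ne]
        norm_num
      · -- v = i
        have hvi' : v.val = i.val := by rw [hvi]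
        have fσv : (σ v).val = (σ i).val := by rw [hvi]
        have f'v : (σ' v).val = i.val := by rw [hvi, h'i]
        have hz : ∀ u : Fin n, c σ u v = c σ' u v := by
          intro u
          rcases lt_or_ge u v with huv | huv
          · have hu : u < i := hvi ▸ huv
            have f1 : (σ u).val = u.val := by rw [hmin u hu]
            have f2 : (σ' u).val = u.val := by rw [h'o u hu.ne (hu.trans hij).ne, hmin u hu]
            have huv' : u.val < v.val := huv
            simp only [hc, Fin.lt_def]
            split_ifs <;> omega
          · have huv' : v.val ≤ u.val := huv
            simp only [hc, Fin.lt_def]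
            split_ifs <;> omega
        rw [Finset.sum_congr rfl (fun u _ => hz u), sub_self,
          if_neg (fun h : i < v ∧ _ => absurd (hvi ▸ h.1) (lt_irrefl i)),
          if_neg hvj.ne]
        norm_num
      · -- i < v < j
        have hvi' : i.val < v.val := hvi
        have hvj' : v.val < j.val := hvj
        have f4 : (σ' v).val = (σ v).val := by rw [h'o v hvi.ne' hvj.ne]
        have hσv : i.val < (σ v).val := hgt v hvi hvj.ne
        have hpt : ∀ u : Fin n, c σ u v - c σ' u v
            = (if u = i ∧ σ v < σ i then (1:ℤ) else 0) := by
          intro u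
          rcases lt_trichotomy u i with hui | hui | hui
          · have f1 : (σ u).val = u.val := by rw [hmin u hui]
            have f2 : (σ' u).val = u.val := by rw [h'o u hui.ne (hui.trans hij).ne, hmin u hui]
            have hui' : u.val < i.val := hui
            simp only [hc, Fin.lt_def, Fin.ext_iff]
            split_ifs <;> omega
          · have hui' : u.val = i.val := by rw [hui]
            have f1 : (σ u).val = (σ i).val := by rw [hui]
            have f2 : (σ' u).val = i.val := by rw [hui, h'i]
            simp only [hc, Fin.lt_def, Fin.ext_iff]
            split_ifs <;> omega
          · rcases eq_or_ne u j with huj | huj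
            · have huj' : u.val = j.val := by rw [huj]
              simp only [hc, Fin.lt_def, Fin.ext_iff]
              split_ifs <;> omega
            · have f1 : (σ' u).val = (σ u).val := by rw [h'o u hui.ne' huj]
              have hinj : (σ u).val ≠ (σ i).val := fun h => hui.ne' (σ.injective (Fin.val_injective h))
              have hui' : i.val < u.val := hui
              simp only [hc, Fin.lt_def, Fin.ext_iff]
              split_ifs <;> omega
        rw [← Finset.sum_sub_distrib, Finset.sum_congr rfl (fun u _ => hpt u),
          if_neg hvj.ne]
        rcases lt_or_ge (σ v) (σ i) with h5 | h5
        · rw [if_pos ⟨hvi, hvj, h5⟩]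
          simp [h5, Finset.sum_ite_eq']
        · rw [if_neg (by rintro ⟨_, _, h6⟩; exact absurd h6 (not_lt.mpr h5))]
          simp [not_lt.mpr h5]
    · -- v = j
      have hvj' : v.val = j.val := by rw [hvj]
      have fσv : (σ v).val = i.val := by rw [hvj, hj]
      have f'v : (σ' v).val = (σ i).val := by rw [hvj, h'j]
      have hpt : ∀ u : Fin n, c σ u v - c σ' u v
          = (if u = i then (1:ℤ) else 0) + (if i < u ∧ u < j ∧ σ u < σ i then (1:ℤ) else 0) := by
        intro u
        rcases lt_trichotomy u i with hui | hui | hui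
        · have f1 : (σ u).val = u.val := by rw [hmin u hui]
          have f2 : (σ' u).val = u.val := by rw [h'o u hui.ne (hui.trans hij).ne, hmin u hui]
          have hui' : u.val < i.val := hui
          simp only [hc, Fin.lt_def, Fin.ext_iff]
          split_ifs <;> omega
        · have hui' : u.val = i.val := by rw [hui]
          have f1 : (σ u).val = (σ i).val := by rw [hui]
          have f2 : (σ' u).val = i.val := by rw [hui, h'i]
          simp only [hc, Fin.lt_def, Fin.ext_iff]
          split_ifs <;> omega
        · have hui' : i.val < u.val := hui
          rcases lt_trichotomy u j with huj | huj | huj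
          · have huj' : u.val < j.val := huj
            have f1 : (σ' u).val = (σ u).val := by rw [h'o u hui.ne' huj.ne]
            have hgtu : i.val < (σ u).val := hgt u hui huj.ne
            have hinj : (σ u).val ≠ (σ i).val := fun h => hui.ne' (σ.injective (Fin.val_injective h))
            simp only [hc, Fin.lt_def, Fin.ext_iff]
            split_ifs <;> omega
          · have huj' : u.val = j.val := by rw [huj]
            simp only [hc, Fin.lt_def, Fin.ext_iff]
            split_ifs <;> omega
          · have huj' : j.val < u.val := huj
            simp only [hc, Fin.lt_def, Fin.ext_iff]
            split_ifs <;> omega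
      rw [← Finset.sum_sub_distrib, Finset.sum_congr rfl (fun u _ => hpt u),
        Finset.sum_add_distrib, ← hmZ,
        if_neg (fun h : i < v ∧ v < j ∧ _ => absurd (hvj ▸ h.2.1) (lt_irrefl j)),
        if_pos hvj]
      simp [Finset.sum_ite_eq']
    · -- j < v
      have hvj' : j.val < v.val := hvj
      have hvi : i < v := hij.trans hvj
      have hσv : i.val < (σ v).val := hgt v hvi hvj.ne'
      have f4 : (σ' v).val = (σ v).val := by rw [h'o v hvi.ne' hvj.ne']
      have hpt : ∀ u : Fin n, c σ u v - c σ' u v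
          = (if u = i ∧ σ v < σ i then (1:ℤ) else 0)
            - (if u = j ∧ σ v < σ i then (1:ℤ) else 0) := by
        intro u
        rcases eq_or_ne u i with hui | hui
        · have hui' : u.val = i.val := by rw [hui]
          have f1 : (σ u).val = (σ i).val := by rw [hui]
          have f2 : (σ' u).val = i.val := by rw [hui, h'i]
          simp only [hc, Fin.lt_def, Fin.ext_iff]
          split_ifs <;> omega
        · rcases eq_or_ne u j with huj | huj
          · have huj' : u.val = j.val := by rw [huj]
            have hui' : u.val ≠ i.val := fun h => hui (Fin.val_injective h)
            have f1 : (σ u).val = i.val := by rw [huj, hj]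
            have f2 : (σ' u).val = (σ i).val := by rw [huj, h'j]
            simp only [hc, Fin.lt_def, Fin.ext_iff]
            split_ifs <;> omega
          · have hui' : u.val ≠ i.val := fun h => hui (Fin.val_injective h)
            have huj' : u.val ≠ j.val := fun h => huj (Fin.val_injective h)
            have f1 : (σ' u).val = (σ u).val := by rw [h'o u hui huj]
            simp only [hc, Fin.lt_def, Fin.ext_iff]
            split_ifs <;> omega
      rw [← Finset.sum_sub_distrib, Finset.sum_congr rfl (fun u _ => hpt u),
        Finset.sum_sub_distrib]
      have e1 : (∑ u : Fin n, if u = i ∧ σ v < σ i then (1:ℤ) else 0)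
          = (∑ u : Fin n, if u = j ∧ σ v < σ i then (1:ℤ) else 0) := by
        by_cases h5 : σ v < σ i
        · simp [h5, Finset.sum_ite_eq']
        · simp [h5]
      rw [e1, sub_self,
        if_neg (fun h : i < v ∧ v < j ∧ _ => absurd (hvj.trans h.2.1) (lt_irrefl j)),
        if_neg hvj.ne']
      norm_num
  have lhs : (invN σ : ℤ) - (invN σ' : ℤ) = mZ + (1 + mZ) := by
    rw [invN_cast2, invN_cast2, ← Finset.sum_sub_distrib,
      Finset.sum_congr rfl (fun v _ => key v), Finset.sum_add_distrib, ← hmZ]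
    congr 1
    simp [Finset.sum_ite_eq']
  linarith




lemma Fd_swap (σ : Equiv.Perm (Fin n)) (i j : Fin n) (hij : i < j)
    (ha : i < σ i) (hj : σ j = i) :
    Fd σ - Fd (σ * Equiv.swap i j) =
      (((σ i).val : ℤ) - i.val) + ((j.val : ℤ) - i.val) - |((σ i).val : ℤ) - j.val| := by
  set σ' := σ * Equiv.swap i j with hσ'
  have h'i : σ' i = i := by simp [hσ', Equiv.Perm.mul_apply, Equiv.swap_apply_left, hj]
  have h'j : σ' j = σ i := by simp [hσ', Equiv.Perm.mul_apply, Equiv.swap_apply_right]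
  have h'o : ∀ v, v ≠ i → v ≠ j → σ' v = σ v := by
    intro v h1 h2; simp [hσ', Equiv.Perm.mul_apply, Equiv.swap_apply_of_ne_of_ne h1 h2]
  have hne : i ≠ j := hij.ne
  have step : Fd σ - Fd σ' = ∑ v ∈ ({i, j} : Finset (Fin n)),
      (|((σ v).val : ℤ) - (v.val : ℤ)| - |((σ' v).val : ℤ) - (v.val : ℤ)|) := by
    rw [Fd, Fd, ← Finset.sum_sub_distrib]
    refine (Finset.sum_subset (Finset.subset_univ _) ?_).symm
    intro x _ hx
    simp only [Finset.mem_insert, Finset.mem_singleton, not_or] at hx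
    rw [h'o x hx.1 hx.2, sub_self]
  rw [step, Finset.sum_pair hne, h'i, h'j, hj]
  have h1 : |((σ i).val : ℤ) - i.val| = ((σ i).val : ℤ) - i.val := by
    rw [abs_of_nonneg]; have : i.val < (σ i).val := ha; omega
  have h2 : |((i).val : ℤ) - i.val| = 0 := by simp
  have h3 : |((i).val : ℤ) - j.val| = (j.val : ℤ) - i.val := by
    rw [abs_of_nonpos] <;> [skip; skip] <;> (have : i.val < j.val := hij; omega)
  rw [h1, h2, h3]; ring

lemma mZ_bounds (σ : Equiv.Perm (Fin n)) (i j : Fin n) (hij : i < j)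
    (hmin : ∀ l, l < i → σ l = l) (ha : i < σ i) (hj : σ j = i) :
    0 ≤ ∑ v : Fin n, (if i < v ∧ v < j ∧ σ v < σ i then (1:ℤ) else 0) ∧
    (∑ v : Fin n, (if i < v ∧ v < j ∧ σ v < σ i then (1:ℤ) else 0)) ≤ (j.val : ℤ) - i.val - 1 ∧
    (∑ v : Fin n, (if i < v ∧ v < j ∧ σ v < σ i then (1:ℤ) else 0)) ≤ ((σ i).val : ℤ) - i.val - 1 := by
  have hgt : ∀ v, i < v → v ≠ j → i < σ v := by
    intro v h1 h2
    rcases lt_trichotomy (σ v) i with h | h | h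
    · exfalso
      have h4 : σ v = v := σ.injective (hmin (σ v) h)
      rw [h4] at h; exact absurd h1 (not_lt.mpr h.le)
    · exact absurd (σ.injective (h.trans hj.symm)) h2
    · exact h
  set T : Finset (Fin n) := Finset.univ.filter (fun v => i < v ∧ v < j ∧ σ v < σ i) with hT
  have hsum : (∑ v : Fin n, (if i < v ∧ v < j ∧ σ v < σ i then (1:ℤ) else 0)) = (T.card : ℤ) := by
    rw [Finset.sum_boole]
  refine ⟨by rw [hsum]; positivity, ?_, ?_⟩
  · have hsub : T ⊆ Finset.Ioo i j := by
      intro v hv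
      simp only [hT, Finset.mem_filter] at hv
      exact Finset.mem_Ioo.mpr ⟨hv.2.1, hv.2.2.1⟩
    have := Finset.card_le_card hsub
    rw [Fin.card_Ioo] at this
    rw [hsum]
    have hij' : i.val < j.val := hij
    omega
  · have hmap : ∀ v ∈ T, σ v ∈ Finset.Ioo i (σ i) := by
      intro v hv
      simp only [hT, Finset.mem_filter] at hv
      exact Finset.mem_Ioo.mpr ⟨hgt v hv.2.1 hv.2.2.1.ne, hv.2.2.2⟩
    have hinj : Set.InjOn σ T := fun x _ y _ h => σ.injective h
    have := Finset.card_le_card_of_injOn σ hmap hinj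
    rw [Fin.card_Ioo] at this
    rw [hsum]
    have hav : i.val < (σ i).val := ha
    omega




lemma lower_aux : ∀ k : ℕ, ∀ σ : Equiv.Perm (Fin n), invN σ = k → (k : ℤ) ≤ Fd σ := by
  intro k
  induction k using Nat.strong_induction_on with
  | _ k ih =>
    intro σ hk
    rcases Nat.eq_zero_or_pos k with rfl | hpos
    · exact_mod_cast Finset.sum_nonneg fun i _ => abs_nonneg _
    -- σ has a non-fixed point
    have hex : ∃ x : Fin n, σ x ≠ x := by
      by_contra hc
      push_neg at hc
      have : invN σ = 0 := by
        unfold invN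
        refine Finset.sum_eq_zero fun i _ => Finset.sum_eq_zero fun u _ => ?_
        rw [if_neg]
        rintro ⟨h1, h2⟩
        rw [hc u, hc i] at h2
        exact absurd (h2.trans h1) (lt_irrefl u)
      omega
    set s : Finset (Fin n) := Finset.univ.filter (fun x => σ x ≠ x) with hs
    have hsne : s.Nonempty := by
      obtain ⟨x, hx⟩ := hex
      exact ⟨x, by simp [hs, hx]⟩
    set i := s.min' hsne with hi
    have hmem : σ i ≠ i := by
      have := s.min'_mem hsne
      simp only [hs, Finset.mem_filter] at this
      exact this.2
    have hmin : ∀ l, l < i → σ l = l := by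
      intro l hl
      by_contra hc
      have : i ≤ l := s.min'_le l (by simp [hs, hc])
      exact absurd hl (not_lt.mpr this)
    have ha : i < σ i := by
      rcases lt_trichotomy (σ i) i with h | h | h
      · exfalso
        have h4 : σ (σ i) = σ i := hmin (σ i) h
        have : σ i = i := σ.injective h4
        exact hmem this
      · exact absurd h hmem
      · exact h
    set j := σ⁻¹ i with hjdef
    have hj : σ j = i := by rw [hjdef]; simp
    have hij : i < j := by
      rcases lt_trichotomy j i with h | h | h
      · exfalso
        have := hmin j h
        rw [this] at hj
        exact absurd hj (h.ne)
      · exfalso; rw [h] at hj; exact hmem hj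
      · exact h
    set σ' := σ * Equiv.swap i j with hσ'
    obtain ⟨hm0, hm1, hm2⟩ := mZ_bounds σ i j hij hmin ha hj
    have hswap := swap_invN σ i j hij hmin ha hj
    have hFd := Fd_swap σ i j hij ha hj
    have hlt : invN σ' < k := by
      rw [← hk]
      have : (invN σ' : ℤ) < invN σ := by rw [hswap]; linarith
      exact_mod_cast this
    have hih := ih (invN σ') hlt σ' rfl
    -- combine
    have habs : |((σ i).val : ℤ) - j.val| ≤ (((σ i).val : ℤ) - i.val) + ((j.val:ℤ) - i.val)
        - 1 - 2 * ∑ v : Fin n, (if i < v ∧ v < j ∧ σ v < σ i then (1:ℤ) else 0) := by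
      rcases le_total ((σ i).val : ℤ) (j.val : ℤ) with h | h
      · rw [abs_of_nonpos (by omega)]; linarith
      · rw [abs_of_nonneg (by omega)]; linarith
    have : (invN σ : ℤ) ≤ Fd σ := by
      rw [hswap]
      have h2 : Fd σ = Fd σ' + (((σ i).val : ℤ) - i.val) + ((j.val : ℤ) - i.val)
          - |((σ i).val : ℤ) - j.val| := by linarith
      rw [h2]
      linarith
    rw [← hk]; exact this



lemma double (P : Fin n × Fin n → Prop) [DecidablePred P]
    (hsymm : ∀ p : Fin n × Fin n, P p → P p.swap)
    (hirr : ∀ p : Fin n × Fin n, P p → p.1 ≠ p.2) :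
    (Finset.univ.filter P).card
      = 2 * (Finset.univ.filter fun p : Fin n × Fin n => p.1 < p.2 ∧ P p).card := by
  classical
  set S := Finset.univ.filter P with hS
  have hsplit := Finset.card_filter_add_card_filter_not
    (s := S) (p := fun p : Fin n × Fin n => p.1 < p.2)
  have h1 : S.filter (fun p => p.1 < p.2) = Finset.univ.filter fun p => p.1 < p.2 ∧ P p := by
    rw [hS, Finset.filter_filter]
    apply Finset.filter_congr
    intro p _
    tauto
  have h2 : (S.filter (fun p => ¬ p.1 < p.2)).card = (S.filter (fun p => p.1 < p.2)).card := by
    apply Finset.card_nbij' (fun p => p.swap) (fun p => p.swap)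
    · intro p hp
      simp only [hS, Finset.mem_coe, Finset.mem_filter, Finset.mem_univ, true_and] at hp ⊢
      refine ⟨hsymm p hp.1, ?_⟩
      have hd := hirr p hp.1
      rcases lt_trichotomy p.1 p.2 with h | h | h
      · exact absurd h hp.2
      · exact absurd h hd
      · exact h
    · intro p hp
      simp only [hS, Finset.mem_coe, Finset.mem_filter, Finset.mem_univ, true_and] at hp ⊢
      exact ⟨hsymm p hp.1, not_lt.mpr hp.2.le⟩
    · intro p _; simp
    · intro p _; simp
  rw [h1] at hsplit
  rw [h1] at h2
  omega

theorem Kred (π ρ : Equiv.Perm (Fin n)) :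
    (Finset.univ.filter (fun p : Fin n × Fin n =>
      p.1 < p.2 ∧
        (((π p.1).val : ℤ) - ((π p.2).val : ℤ)) * (((ρ p.1).val : ℤ) - ((ρ p.2).val : ℤ)) < 0)).card
      = invN (π * ρ⁻¹) := by
  classical
  set σ := π * ρ⁻¹ with hσ
  set Q : Fin n × Fin n → Prop := fun p =>
    (((π p.1).val : ℤ) - ((π p.2).val : ℤ)) * (((ρ p.1).val : ℤ) - ((ρ p.2).val : ℤ)) < 0
    with hQ
  set R : Fin n × Fin n → Prop := fun p =>
    (((σ p.1).val : ℤ) - ((σ p.2).val : ℤ)) * ((p.1.val : ℤ) - (p.2.val : ℤ)) < 0 with hR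
  have hQsymm : ∀ p, Q p → Q p.swap := by
    intro p hp
    simp only [hQ, Prod.fst_swap, Prod.snd_swap] at hp ⊢
    nlinarith [hp]
  have hQirr : ∀ p, Q p → p.1 ≠ p.2 := by
    intro p hp h
    simp only [hQ, h] at hp
    simp at hp
  have hRsymm : ∀ p, R p → R p.swap := by
    intro p hp
    simp only [hR, Prod.fst_swap, Prod.snd_swap] at hp ⊢
    nlinarith [hp]
  have hRirr : ∀ p, R p → p.1 ≠ p.2 := by
    intro p hp h
    simp only [hR, h] at hp
    simp at hp
  have hQR : (Finset.univ.filter Q).card = (Finset.univ.filter R).card := by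
    have e1 : ∀ x, σ (ρ x) = π x := by intro x; simp [hσ]
    apply Finset.card_equiv (Equiv.prodCongr ρ ρ)
    intro p
    simp [hQ, hR, e1]
  have hinvR : (Finset.univ.filter fun p : Fin n × Fin n => p.1 < p.2 ∧ R p).card = invN σ := by
    have : invN σ = (Finset.univ.filter fun p : Fin n × Fin n => p.1 < p.2 ∧ σ p.2 < σ p.1).card := by
      unfold invN
      rw [Finset.card_filter]
      exact (Fintype.sum_prod_type
        (f := fun p : Fin n × Fin n => if p.1 < p.2 ∧ σ p.2 < σ p.1 then (1:ℕ) else 0)).symm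
    rw [this]
    congr 1
    apply Finset.filter_congr
    intro p _
    constructor
    · rintro ⟨h1, h2⟩
      refine ⟨h1, ?_⟩
      simp only [hR] at h2
      have h1' : (p.1.val : ℤ) < p.2.val := by exact_mod_cast h1
      have : (0:ℤ) < ((σ p.1).val : ℤ) - ((σ p.2).val : ℤ) := by nlinarith
      have : ((σ p.2).val : ℤ) < (σ p.1).val := by omega
      exact_mod_cast this
    · rintro ⟨h1, h2⟩
      refine ⟨h1, ?_⟩
      simp only [hR]
      have h1' : (p.1.val : ℤ) < p.2.val := by exact_mod_cast h1
      have h2' : ((σ p.2).val : ℤ) < (σ p.1).val := by exact_mod_cast h2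
      nlinarith
  have hQd := double Q hQsymm hQirr
  have hRd := double R hRsymm hRirr
  -- statement's filter is filter (lt ∧ Q)
  have : (Finset.univ.filter fun p : Fin n × Fin n => p.1 < p.2 ∧ Q p).card = invN σ := by
    omega
  exact this

theorem mainF (π ρ : Equiv.Perm (Fin n)) :
    (∑ i : Fin n, |((π i).val : ℤ) - ((ρ i).val : ℤ)|) = Fd (π * ρ⁻¹) := by
  rw [Fd, ← Equiv.sum_comp ρ (fun w => |(((π * ρ⁻¹) w).val : ℤ) - (w.val : ℤ)|)]
  refine Finset.sum_congr rfl fun i _ => ?_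
  simp [Equiv.Perm.mul_apply]

end DG

/-- Diaconis–Graham inequality: Kendall's tau `K` and Spearman's footrule `F`
between two permutations satisfy `K ≤ F ≤ 2K`. -/
theorem stmt_13 (n : ℕ) (π ρ : Equiv.Perm (Fin n)) :
    let K : ℕ := (Finset.univ.filter (fun p : Fin n × Fin n =>
      p.1 < p.2 ∧
        (((π p.1).val : ℤ) - ((π p.2).val : ℤ)) * (((ρ p.1).val : ℤ) - ((ρ p.2).val : ℤ)) < 0)).card
    let F : ℤ := ∑ i : Fin n, |((π i).val : ℤ) - ((ρ i).val : ℤ)|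
    (K : ℤ) ≤ F ∧ F ≤ 2 * K := by
  intro K F
  have hK : K = DG.invN (π * ρ⁻¹) := DG.Kred π ρ
  have hF : F = DG.Fd (π * ρ⁻¹) := DG.mainF π ρ
  rw [hK, hF]
  exact ⟨DG.lower_aux _ _ rfl, DG.upper _⟩
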